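/- For a = (1/2 + δ/2)π with 0 < δ < 1 and b = λπ, λ ∈ ℝ, define M(λ) = z·(1−cos z̄)/sin z̄ with z = a + bi. Then Re M(λ) = (a sin a + b sinh b)/(cosh b + cos a), and there exists C ≥ 1 (depending on δ) such that (1/C)(1+|λ|) ≤ Re M(λ) ≤ C(1+|λ|) for all λ ∈ ℝ. -/

import Mathlib

open MeasureTheory Real Set Filter

/-- Hilbert transform on ℝ (principal value form). -/
noncomputable def hilbert (f : ℝ → ℝ) (x : ℝ) : ℝ :=
  (1 / Real.pi) * ∫ y in Set.Ioi (0:ℝ), (f (x - y) - f (x + y)) / y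

/-- Fractional Laplacian Λ^s = (−Δ)^{s/2}, the Fourier multiplier |ξ|^s. -/
noncomputable def lam (s : ℝ) (f : ℝ → ℝ) (x : ℝ) : ℝ :=
  (FourierTransformInv.fourierInv
    (fun ξ : ℝ => ((|ξ| ^ s : ℝ) : ℂ) * FourierTransform.fourier (fun y : ℝ => (f y : ℂ)) ξ) x).re

lemma sms (x:ℝ) : x * Real.sinh x = |x| * Real.sinh |x| := by
  rcases abs_cases x with ⟨h,_⟩|⟨h,_⟩ <;> rw [h]
  rw [Real.sinh_neg]; ring

lemma sinh_le_cosh' (x:ℝ) : Real.sinh x ≤ Real.cosh x := by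
  rw [Real.sinh_eq, Real.cosh_eq]
  have := Real.exp_pos (-x); linarith

lemma sinh_nonneg' (x:ℝ) (hx : 0 ≤ x) : 0 ≤ Real.sinh x := by
  rw [Real.sinh_eq]
  have := Real.exp_le_exp.2 (neg_le_self hx); linarith

lemma re_formula (a b : ℝ) (hsa : 0 < Real.sin a) (hca : -1 < Real.cos a) :
    (((a:ℂ) + (b:ℂ) * Complex.I) * (1 - Complex.cos ((starRingEnd ℂ) ((a:ℂ) + (b:ℂ) * Complex.I)))
      / Complex.sin ((starRingEnd ℂ) ((a:ℂ) + (b:ℂ) * Complex.I))).re =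
    (a * Real.sin a + b * Real.sinh b) / (Real.cosh b + Real.cos a) := by
  have hconj : (starRingEnd ℂ) ((a:ℂ) + (b:ℂ) * Complex.I) = (a:ℂ) - (b:ℂ) * Complex.I := by
    simp [map_add, map_mul, Complex.conj_ofReal, Complex.conj_I]; ring
  have hcoshb := Real.one_le_cosh b
  have hden : Real.cosh b + Real.cos a > 0 := by linarith
  have hs : Complex.sin ((a:ℂ) - (b:ℂ) * Complex.I)
      = ((Real.sin a * Real.cosh b : ℝ) : ℂ) - ((Real.cos a * Real.sinh b : ℝ) : ℂ) * Complex.I := by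
    rw [Complex.sin_sub, Complex.sin_mul_I, Complex.cos_mul_I]
    push_cast; ring
  have hc : Complex.cos ((a:ℂ) - (b:ℂ) * Complex.I)
      = ((Real.cos a * Real.cosh b : ℝ) : ℂ) + ((Real.sin a * Real.sinh b : ℝ) : ℂ) * Complex.I := by
    rw [Complex.cos_sub, Complex.sin_mul_I, Complex.cos_mul_I]
    push_cast; ring
  have hden1 : Complex.sin ((a:ℂ) - (b:ℂ) * Complex.I) ≠ 0 := by
    rw [hs]
    intro h
    have h2 := congrArg Complex.re h
    simp only [Complex.sub_re, Complex.mul_re, Complex.ofReal_re, Complex.ofReal_im,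
      Complex.I_re, Complex.I_im, Complex.zero_re] at h2
    nlinarith [Real.cosh_pos b]
  have hden2 : ((Real.cosh b + Real.cos a : ℝ) : ℂ) ≠ 0 := by
    exact_mod_cast ne_of_gt hden
  have key : ((a:ℂ) + (b:ℂ) * Complex.I) * (1 - Complex.cos ((a:ℂ) - (b:ℂ) * Complex.I))
      / Complex.sin ((a:ℂ) - (b:ℂ) * Complex.I)
      = ((a:ℂ) + (b:ℂ) * Complex.I) * (((Real.sin a : ℝ):ℂ) - ((Real.sinh b : ℝ):ℂ) * Complex.I)
      / ((Real.cosh b + Real.cos a : ℝ) : ℂ) := by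
    rw [div_eq_div_iff hden1 hden2, hc, hs]
    push_cast
    linear_combination (-(((a:ℂ) + (b:ℂ)*Complex.I)) * Complex.cosh (b:ℂ)) * (Complex.sin_sq_add_cos_sq (a:ℂ))
      + (-(((a:ℂ) + (b:ℂ)*Complex.I)) * Complex.cos (a:ℂ)) * (Complex.cosh_sq_sub_sinh_sq (b:ℂ))
      + (-(((a:ℂ) + (b:ℂ)*Complex.I)) * Complex.cos (a:ℂ) * Complex.sinh (b:ℂ)^2) * Complex.I_sq
  rw [hconj, key]
  rw [Complex.div_ofReal_re]
  congr 1
  simp [Complex.mul_re, Complex.sin_ofReal_re, Complex.sinh_ofReal_re]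

lemma key_ineq (s t : ℝ) (hs : 0 < s) (ht : 0 ≤ t) :
    min (s/4) (1/6) * ((1+t) * Real.cosh t) ≤ s + t * Real.sinh t := by
  have hm1 : min (s/4) (1/6) ≤ s/4 := min_le_left _ _
  have hm2 : min (s/4) (1/6) ≤ 1/6 := min_le_right _ _
  have hm0 : 0 < min (s/4) (1/6) := lt_min (by linarith) (by norm_num)
  have hcp := Real.cosh_pos t
  have hts : 0 ≤ t * Real.sinh t := mul_nonneg ht (sinh_nonneg' t ht)
  rcases le_total t 1 with h1 | h1
  · have hc : Real.cosh t ≤ Real.cosh 1 :=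
      Real.cosh_le_cosh.2 (by rwa [_root_.abs_of_nonneg ht, _root_.abs_of_nonneg (by norm_num : (0:ℝ) ≤ 1)])
    have hc1 : Real.cosh 1 ≤ 2 := by
      rw [Real.cosh_eq]
      have h2 : Real.exp (-1:ℝ) ≤ 1 := by
        rw [show (1:ℝ) = Real.exp 0 by rw [Real.exp_zero]]
        exact Real.exp_le_exp.2 (by norm_num)
      have h3 : Real.exp (1:ℝ) < 2.7182818286 := Real.exp_one_lt_d9
      linarith
    have e1 : (1+t) * Real.cosh t ≤ 2 * 2 :=
      mul_le_mul (by linarith) (by linarith) hcp.le (by norm_num)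
    have e2 : min (s/4) (1/6) * ((1+t) * Real.cosh t) ≤ (s/4) * (2*2) :=
      mul_le_mul hm1 e1 (by positivity) (by linarith)
    linarith
  · have hc1 : (3:ℝ)/2 ≤ Real.cosh 1 := by
      rw [Real.cosh_eq]
      have h5 : Real.exp (-1:ℝ) * Real.exp 1 = 1 := by rw [← Real.exp_add]; norm_num
      nlinarith [Real.exp_one_lt_d9, Real.exp_one_gt_d9, Real.exp_pos (-1:ℝ)]
    have hc : Real.cosh 1 ≤ Real.cosh t :=
      Real.cosh_le_cosh.2 (by rwa [_root_.abs_of_nonneg ht, _root_.abs_of_nonneg (by norm_num : (0:ℝ) ≤ 1)])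
    have hsinh : Real.cosh t - 1 ≤ Real.sinh t := by
      rw [Real.cosh_eq, Real.sinh_eq]
      have h2 : Real.exp (-t) ≤ 1 := by
        rw [show (1:ℝ) = Real.exp 0 by rw [Real.exp_zero]]
        exact Real.exp_le_exp.2 (by linarith)
      linarith
    have h3 : Real.cosh t / 3 ≤ Real.sinh t := by linarith
    have h5 : t * (Real.cosh t / 3) ≤ t * Real.sinh t := mul_le_mul_of_nonneg_left h3 ht
    have e6 : 0 ≤ (t - (1+t)/2) * Real.cosh t := mul_nonneg (by linarith) hcp.le
    have h4 : (1+t) * Real.cosh t / 6 ≤ t * Real.sinh t := by nlinarith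
    have e7 : min (s/4) (1/6) * ((1+t) * Real.cosh t) ≤ (1/6) * ((1+t) * Real.cosh t) :=
      mul_le_mul_of_nonneg_right hm2 (by positivity)
    linarith

set_option maxHeartbeats 1000000 in
lemma bounds_aux (a : ℝ) (ha0 : 0 < a) (hsa : 0 < Real.sin a)
    (hca1 : -1 < Real.cos a) (hca0 : Real.cos a < 0) :
    ∃ C : ℝ, 1 ≤ C ∧ ∀ lamb : ℝ,
      (1/C) * (1 + |lamb|) ≤
        (a * Real.sin a + (lamb * Real.pi) * Real.sinh (lamb * Real.pi))
          / (Real.cosh (lamb * Real.pi) + Real.cos a) ∧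
      (a * Real.sin a + (lamb * Real.pi) * Real.sinh (lamb * Real.pi))
          / (Real.cosh (lamb * Real.pi) + Real.cos a) ≤ C * (1 + |lamb|) := by
  have hπ0 := Real.pi_pos
  have hπ3 := Real.pi_gt_three
  set s : ℝ := a * Real.sin a with hs_def
  have hs : 0 < s := mul_pos ha0 hsa
  set c : ℝ := min (s/4) (1/6) with hc_def
  have hc : 0 < c := lt_min (by linarith) (by norm_num)
  have h1ca : 0 < 1 + Real.cos a := by linarith
  refine ⟨max ((s + Real.pi)/(1 + Real.cos a)) (max (2/c) 1),
    le_max_of_le_right (le_max_right _ _), fun lamb => ?_⟩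
  set C : ℝ := max ((s + Real.pi)/(1 + Real.cos a)) (max (2/c) 1) with hC_def
  have hC1 : (1:ℝ) ≤ C := le_max_of_le_right (le_max_right _ _)
  have hC0 : (0:ℝ) < C := by linarith
  set b : ℝ := lamb * Real.pi with hb_def
  set t : ℝ := |b| with ht_def
  have ht0 : 0 ≤ t := abs_nonneg b
  have ht' : t = |lamb| * Real.pi := by rw [ht_def, hb_def, abs_mul, abs_of_pos hπ0]
  have htl : |lamb| ≤ t := by nlinarith [abs_nonneg lamb]
  have hcbt : Real.cosh b = Real.cosh t := (Real.cosh_abs b).symm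
  have hbs : b * Real.sinh b = t * Real.sinh t := sms b
  have hct1 : 1 ≤ Real.cosh t := Real.one_le_cosh t
  have hD : 0 < Real.cosh b + Real.cos a := by rw [hcbt]; linarith
  have hDup : Real.cosh b + Real.cos a ≤ 2 * Real.cosh t := by rw [hcbt]; linarith
  have hDlo : (1 + Real.cos a) * Real.cosh t ≤ Real.cosh b + Real.cos a := by
    rw [hcbt]; nlinarith
  constructor
  · rw [le_div_iff₀ hD]
    have key := key_ineq s t hs ht0
    have h2c : 2/c ≤ C := le_max_of_le_right (le_max_left _ _)
    have h1C : 1/C ≤ c/2 := by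
      have h' : 1/C ≤ 1/(2/c) := one_div_le_one_div_of_le (by positivity) h2c
      rwa [one_div_div] at h'
    have e1 : (1/C) * (1 + |lamb|) ≤ (c/2) * (1 + |lamb|) :=
      mul_le_mul_of_nonneg_right h1C (by positivity)
    have e2 : (1/C) * (1 + |lamb|) * (Real.cosh b + Real.cos a)
        ≤ (c/2) * (1 + |lamb|) * (2 * Real.cosh t) :=
      mul_le_mul e1 hDup hD.le (by positivity)
    have e4 : c * ((1 + |lamb|) * Real.cosh t) ≤ c * ((1 + t) * Real.cosh t) :=
      mul_le_mul_of_nonneg_left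
        (mul_le_mul_of_nonneg_right (by linarith) (by positivity)) hc.le
    rw [hbs]
    nlinarith [e2, e4, key]
  · rw [div_le_iff₀ hD]
    have u1 : b * Real.sinh b ≤ t * Real.cosh t := by
      rw [hbs]; exact mul_le_mul_of_nonneg_left (sinh_le_cosh' t) ht0
    have u2 : (s + Real.pi)/(1 + Real.cos a) ≤ C := le_max_left _ _
    have u3 : ((s + Real.pi)/(1 + Real.cos a)) * ((1 + |lamb|) * ((1 + Real.cos a) * Real.cosh t))
        ≤ C * ((1 + |lamb|) * (Real.cosh b + Real.cos a)) :=
      mul_le_mul u2 (mul_le_mul_of_nonneg_left hDlo (by positivity)) (by positivity) hC0.le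
    have u4 : ((s + Real.pi)/(1 + Real.cos a)) * ((1 + |lamb|) * ((1 + Real.cos a) * Real.cosh t))
        = (s + Real.pi) * (1 + |lamb|) * Real.cosh t := by
      field_simp
    rw [u4] at u3
    have w : (1:ℝ) ≤ (1 + |lamb|) * Real.cosh t := by
      nlinarith [abs_nonneg lamb, mul_nonneg (abs_nonneg lamb) (Real.cosh_pos t).le]
    have u5a : s * 1 ≤ s * ((1 + |lamb|) * Real.cosh t) := mul_le_mul_of_nonneg_left w hs.le
    have u5b : t * Real.cosh t ≤ Real.pi * (1 + |lamb|) * Real.cosh t := by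
      have h6 : t ≤ Real.pi * (1 + |lamb|) := by nlinarith [abs_nonneg lamb]
      exact mul_le_mul_of_nonneg_right h6 (Real.cosh_pos t).le
    nlinarith [u1, u3, u5a, u5b]


open Complex in
/-- Analysis of the multiplier `M(λ) = z (1−cos z̄)/sin z̄`, `z = a + bi`,
`a = (1/2+δ/2)π`, `b = λπ`: real-part formula and two-sided linear bounds. -/
theorem stmt7 (δ : ℝ) (hδ0 : 0 < δ) (hδ1 : δ < 1) :
    (∀ lamb : ℝ,
      let a : ℝ := (1/2 + δ/2) * Real.pi
      let b : ℝ := lamb * Real.pi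
      let z : ℂ := a + b * Complex.I
      ((z * (1 - Complex.cos ((starRingEnd ℂ) z)) / Complex.sin ((starRingEnd ℂ) z)).re =
        (a * Real.sin a + b * Real.sinh b) / (Real.cosh b + Real.cos a))) ∧
    ∃ C : ℝ, 1 ≤ C ∧ ∀ lamb : ℝ,
      let a : ℝ := (1/2 + δ/2) * Real.pi
      let b : ℝ := lamb * Real.pi
      let z : ℂ := a + b * Complex.I
      (1 / C) * (1 + |lamb|) ≤
          (z * (1 - Complex.cos ((starRingEnd ℂ) z)) / Complex.sin ((starRingEnd ℂ) z)).re ∧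
        (z * (1 - Complex.cos ((starRingEnd ℂ) z)) / Complex.sin ((starRingEnd ℂ) z)).re ≤
          C * (1 + |lamb|) := by
  have hπ0 := Real.pi_pos
  have hπ3 := Real.pi_gt_three
  have ha0 : 0 < (1/2 + δ/2) * Real.pi := by nlinarith
  have haπ : (1/2 + δ/2) * Real.pi < Real.pi := by
    nlinarith [mul_pos (by linarith : (0:ℝ) < 1/2 - δ/2) hπ0]
  have ha2 : Real.pi/2 < (1/2 + δ/2) * Real.pi := by
    nlinarith [mul_pos (by linarith : (0:ℝ) < δ/2) hπ0]
  have hsa : 0 < Real.sin ((1/2 + δ/2) * Real.pi) := Real.sin_pos_of_pos_of_lt_pi ha0 haπ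
  have hca1 : -1 < Real.cos ((1/2 + δ/2) * Real.pi) := by
    nlinarith [Real.sin_sq_add_cos_sq ((1/2 + δ/2) * Real.pi), mul_pos hsa hsa]
  have hca0 : Real.cos ((1/2 + δ/2) * Real.pi) < 0 :=
    Real.cos_neg_of_pi_div_two_lt_of_lt ha2 (by linarith)
  constructor
  · intro lamb
    exact re_formula ((1/2 + δ/2) * Real.pi) (lamb * Real.pi) hsa hca1
  · obtain ⟨C, hC1, hC⟩ := bounds_aux ((1/2 + δ/2) * Real.pi) ha0 hsa hca1 hca0
    refine ⟨C, hC1, fun lamb => ?_⟩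
    have hre := re_formula ((1/2 + δ/2) * Real.pi) (lamb * Real.pi) hsa hca1
    exact ⟨le_of_le_of_eq (hC lamb).1 hre.symm, le_of_eq_of_le hre (hC lamb).2⟩
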